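/- arXiv:1704.04892 — 2 statements merged into one kernel-verified Lean document; each statement's English description precedes it below -/
import Mathlib

section
/- The number of spanning trees of J_{2,4} that contain exactly k of the 4 spoke edges is 32 for k = 1, 80 for k = 2, 64 for k = 3, and 16 for k = 4. -/
open SimpleGraph

/-- The Jahangir graph `J_{n,m}`: a cycle on `n*m` vertices (`some i`) plus a
central vertex `none` adjacent to the `m` vertices whose index is divisible by `n`. -/
def jahangir (n m : ℕ) : SimpleGraph (Option (Fin (n * m))) :=
  SimpleGraph.fromRel (fun a b =>
    match a, b with
    | some i, some j => (j : ℕ) = ((i : ℕ) + 1) % (n * m)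
    | none, some i => n ∣ (i : ℕ)
    | _, _ => False)

/-- The number of spanning trees of a graph. -/
noncomputable def spanningTreeCount {V : Type*} (G : SimpleGraph V) : ℕ :=
  Nat.card {H : G.Subgraph // H.IsSpanning ∧ H.coe.IsTree}

/-- The number of spoke edges (edges at the central vertex) of a subgraph of `J_{n,m}`. -/
noncomputable def spokeCount {n m : ℕ} (H : (jahangir n m).Subgraph) : ℕ :=
  {i : Fin (n * m) | H.Adj none (some i)}.ncard

namespace Jh

abbrev V9 : Type := Option (Fin (2 * 4))

abbrev Gc : SimpleGraph V9 := jahangir 2 4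

def jrel : V9 → V9 → Prop := fun a b =>
  match a, b with
  | some i, some j => (j : ℕ) = ((i : ℕ) + 1) % (2 * 4)
  | none, some i => 2 ∣ (i : ℕ)
  | _, _ => False

instance jrelDec : ∀ a b : V9, Decidable (jrel a b)
  | some _, some _ => inferInstanceAs (Decidable (_ = _))
  | none, some _ => inferInstanceAs (Decidable (_ ∣ _))
  | some _, none => inferInstanceAs (Decidable False)
  | none, none => inferInstanceAs (Decidable False)

lemma Gc_adj (a b : V9) : Gc.Adj a b ↔ a ≠ b ∧ (jrel a b ∨ jrel b a) := by
  cases a <;> cases b <;>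
    simp only [jahangir, SimpleGraph.fromRel_adj, jrel] <;> tauto

instance decAdj : DecidableRel Gc.Adj := fun a b =>
  decidable_of_iff _ (Gc_adj a b).symm

def ed : Fin 12 → Sym2 V9 :=
  ![s(some 0, some 1), s(some 1, some 2), s(some 2, some 3), s(some 3, some 4),
    s(some 4, some 5), s(some 5, some 6), s(some 6, some 7), s(some 7, some 0),
    s(none, some 0), s(none, some 2), s(none, some 4), s(none, some 6)]

def ed1 : Fin 12 → V9 :=
  ![some 0, some 1, some 2, some 3, some 4, some 5, some 6, some 7, none, none, none, none]

def ed2 : Fin 12 → V9 :=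
  ![some 1, some 2, some 3, some 4, some 5, some 6, some 7, some 0,
    some 0, some 2, some 4, some 6]

lemma ed_eq (i : Fin 12) : ed i = s(ed1 i, ed2 i) := by revert i; decide

lemma ed_ne (i : Fin 12) : ed1 i ≠ ed2 i := by revert i; decide

lemma ed_inj : Function.Injective ed := by decide

lemma adj_iff (a b : V9) : Gc.Adj a b ↔ ∃ i, ed i = s(a, b) := by revert a b; decide

def sig : Fin 4 → Fin (2 * 4) := fun j => ⟨2 * j.val, by omega⟩
def tau : Fin 4 → Fin 12 := fun j => ⟨8 + j.val, by omega⟩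

lemma sig_inj : Function.Injective sig := by decide

lemma ed_tau (j : Fin 4) : ed (tau j) = s(none, some (sig j)) := by revert j; decide

lemma spoke_case (idx : Fin 12) (i : Fin (2 * 4)) (h : ed idx = s(none, some i)) :
    ∃ j : Fin 4, idx = tau j ∧ i = sig j := by revert idx i; decide

section TreeLemmas

variable {W : Type*} [Fintype W]

lemma connected_deleteEdges_of_reachable {G : SimpleGraph W} {x y : W}
    (hc : G.Connected) (hr : (G.deleteEdges {s(x, y)}).Reachable x y) :
    (G.deleteEdges {s(x, y)}).Connected := by
  rw [connected_iff] at hc ⊢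
  refine ⟨fun u v => ?_, hc.2⟩
  obtain ⟨p⟩ := hc.1 u v
  induction p with
  | nil => exact Reachable.refl _
  | @cons a b c h q ih =>
    refine Reachable.trans ?_ ih
    by_cases he : s(a, b) = s(x, y)
    · rw [Sym2.eq_iff] at he
      rcases he with ⟨rfl, rfl⟩ | ⟨rfl, rfl⟩
      · exact hr
      · exact hr.symm
    · exact SimpleGraph.Adj.reachable (by rw [deleteEdges_adj]; exact ⟨h, by simpa using he⟩)

lemma edgeSet_ncard_eq (G : SimpleGraph W) [Fintype G.edgeSet] :
    G.edgeSet.ncard = G.edgeFinset.card := by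
  rw [Set.ncard_eq_toFinset_card']; rfl

lemma card_le_of_connected :
    ∀ (n : ℕ) (G : SimpleGraph W), G.edgeSet.ncard = n → G.Connected →
      Fintype.card W ≤ n + 1 := by
  intro n
  induction n using Nat.strong_induction_on with
  | _ n IH =>
    intro G hn hc
    classical
    by_cases hac : G.IsAcyclic
    · have ht : G.IsTree := ⟨hc, hac⟩
      rw [← ht.card_edgeFinset, ← edgeSet_ncard_eq, hn]
    · rw [SimpleGraph.isAcyclic_iff_forall_adj_isBridge] at hac
      push_neg at hac
      obtain ⟨x, y, hadj, hbr⟩ := hac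
      rw [SimpleGraph.isBridge_iff] at hbr
      have hr : (G.deleteEdges {s(x, y)}).Reachable x y := by
        by_contra hnr
        exact hbr hnr
      have hc' := connected_deleteEdges_of_reachable hc hr
      have hfin : G.edgeSet.Finite := Set.toFinite _
      have hmem : s(x, y) ∈ G.edgeSet := hadj
      have hcard : (G.deleteEdges {s(x, y)}).edgeSet.ncard = n - 1 := by
        rw [SimpleGraph.edgeSet_deleteEdges, Set.ncard_diff_singleton_of_mem hmem, hn]
      have hn1 : 1 ≤ n := by
        rw [← hn]
        exact (Set.ncard_pos hfin).mpr ⟨_, hmem⟩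
      have := IH (n - 1) (by omega) _ hcard hc'
      omega

lemma isTree_iff_card (G : SimpleGraph W) :
    G.IsTree ↔ G.Connected ∧ G.edgeSet.ncard + 1 = Fintype.card W := by
  classical
  constructor
  · intro ht
    exact ⟨ht.isConnected, by rw [edgeSet_ncard_eq, ht.card_edgeFinset]⟩
  · rintro ⟨hc, hcard⟩
    refine ⟨hc, ?_⟩
    rw [SimpleGraph.isAcyclic_iff_forall_adj_isBridge]
    by_contra hac
    push_neg at hac
    obtain ⟨x, y, hadj, hbr⟩ := hac
    rw [SimpleGraph.isBridge_iff] at hbr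
    have hr : (G.deleteEdges {s(x, y)}).Reachable x y := by
      by_contra hnr
      exact hbr hnr
    have hc' := connected_deleteEdges_of_reachable hc hr
    have hfin : G.edgeSet.Finite := Set.toFinite _
    have hmem : s(x, y) ∈ G.edgeSet := hadj
    have hn1 : 1 ≤ G.edgeSet.ncard := (Set.ncard_pos hfin).mpr ⟨_, hmem⟩
    have hcard' : (G.deleteEdges {s(x, y)}).edgeSet.ncard = G.edgeSet.ncard - 1 := by
      rw [SimpleGraph.edgeSet_deleteEdges, Set.ncard_diff_singleton_of_mem hmem]
    have := card_le_of_connected _ _ hcard' hc'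
    omega

end TreeLemmas

section BFS

variable {W : Type*} [DecidableEq W] [Fintype W] {A : SimpleGraph W} {f : Finset W → Finset W}

lemma root_mem_iterate (hsub : ∀ m, m ⊆ f m) (r : W) :
    ∀ n : ℕ, r ∈ f^[n] {r} := by
  intro n
  induction n with
  | zero => simp
  | succ n ihn => rw [Function.iterate_succ_apply']; exact hsub _ ihn

lemma walk_mem_iterate (hsub : ∀ m, m ⊆ f m)
    (hcomp : ∀ m u v, u ∈ m → A.Adj u v → v ∈ f m) {r : W} :
    ∀ {v : W} (p : A.Walk v r) (n : ℕ), p.length ≤ n → v ∈ f^[n] {r} := by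
  intro v p
  induction p with
  | nil => exact fun n _ => root_mem_iterate hsub _ n
  | @cons a b c h q ih =>
    intro n hn
    cases n with
    | zero => simp at hn
    | succ n =>
      rw [Function.iterate_succ_apply']
      exact hcomp _ b a (ih n (by simpa using hn)) h.symm

lemma iterate_sound (hsound : ∀ m v, v ∈ f m → v ∈ m ∨ ∃ u ∈ m, A.Adj u v) {r : W} :
    ∀ (n : ℕ) (v : W), v ∈ f^[n] {r} → A.Reachable r v := by
  intro n
  induction n with
  | zero =>
    intro v hv
    simp only [Function.iterate_zero, id_eq, Finset.mem_singleton] at hv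
    subst hv
    exact Reachable.refl v
  | succ n ihn =>
    intro v hv
    rw [Function.iterate_succ_apply'] at hv
    rcases hsound _ _ hv with h | ⟨u, hu, hadj⟩
    · exact ihn v h
    · exact (ihn u hu).trans hadj.reachable

lemma connected_iff_bfs (hsub : ∀ m, m ⊆ f m)
    (hcomp : ∀ m u v, u ∈ m → A.Adj u v → v ∈ f m)
    (hsound : ∀ m v, v ∈ f m → v ∈ m ∨ ∃ u ∈ m, A.Adj u v)
    (r : W) (n : ℕ) (hn : Fintype.card W ≤ n + 1) :
    A.Connected ↔ ∀ v, v ∈ f^[n] {r} := by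
  constructor
  · intro hc v
    have hreach : A.Reachable v r := hc.preconnected v r
    refine hreach.elim_path fun p => ?_
    exact walk_mem_iterate hsub hcomp p.val n (by have := p.prop.length_lt; omega)
  · intro h
    rw [connected_iff]
    refine ⟨fun u v => ?_, ⟨r⟩⟩
    exact (iterate_sound hsound n u (h u)).symm.trans (iterate_sound hsound n v (h v))

end BFS

lemma Iso.isTree_iff {W W' : Type*} {A : SimpleGraph W} {B : SimpleGraph W'}
    (e : A ≃g B) : A.IsTree ↔ B.IsTree := by
  constructor
  · rintro ⟨hc, ha⟩
    exact ⟨e.connected_iff.mp hc, fun v c hcyc =>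
      ha (c.map e.symm.toHom) (hcyc.map e.symm.toEquiv.injective)⟩
  · rintro ⟨hc, ha⟩
    exact ⟨e.connected_iff.mpr hc, fun v c hcyc =>
      ha (c.map e.toHom) (hcyc.map e.toEquiv.injective)⟩

/-! ### Concrete graphs from edge index sets -/

open Finset in
def Gs (s : Finset (Fin 12)) : SimpleGraph V9 :=
  SimpleGraph.fromEdgeSet ↑(s.image ed)

lemma Gs_adj (s : Finset (Fin 12)) (a b : V9) :
    (Gs s).Adj a b ↔ (∃ i ∈ s, ed i = s(a, b)) ∧ a ≠ b := by
  rw [Gs, SimpleGraph.fromEdgeSet_adj]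
  simp [Finset.mem_image]

def estep (s : Finset (Fin 12)) (m : Finset V9) : Finset V9 :=
  m ∪ (s.filter (fun i => ed1 i ∈ m ∨ ed2 i ∈ m)).biUnion (fun i => {ed1 i, ed2 i})

lemma estep_sub (s : Finset (Fin 12)) (m : Finset V9) : m ⊆ estep s m :=
  Finset.subset_union_left

lemma estep_comp (s : Finset (Fin 12)) (m : Finset V9) (u v : V9)
    (hu : u ∈ m) (h : (Gs s).Adj u v) : v ∈ estep s m := by
  rw [Gs_adj] at h
  obtain ⟨⟨i, hi, hed⟩, _⟩ := h
  rw [ed_eq i, Sym2.eq_iff] at hed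
  refine Finset.mem_union_right _ (Finset.mem_biUnion.mpr ⟨i, ?_, ?_⟩)
  · rcases hed with ⟨h1, _⟩ | ⟨h1, h2⟩ <;>
      exact Finset.mem_filter.mpr ⟨hi, by simp_all⟩
  · rcases hed with ⟨h1, h2⟩ | ⟨h1, h2⟩ <;> simp [← h1, ← h2]

lemma estep_sound (s : Finset (Fin 12)) (m : Finset V9) (v : V9)
    (hv : v ∈ estep s m) : v ∈ m ∨ ∃ u ∈ m, (Gs s).Adj u v := by
  rcases Finset.mem_union.mp hv with h | h
  · exact Or.inl h
  · obtain ⟨i, hi, hv2⟩ := Finset.mem_biUnion.mp h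
    obtain ⟨his, hm⟩ := Finset.mem_filter.mp hi
    have hne := ed_ne i
    simp only [Finset.mem_insert, Finset.mem_singleton] at hv2
    rcases hv2 with rfl | rfl
    · rcases hm with hm | hm
      · exact Or.inl hm
      · exact Or.inr ⟨ed2 i, hm, (Gs_adj _ _ _).mpr
          ⟨⟨i, his, by rw [ed_eq i, Sym2.eq_swap]⟩, (Ne.symm hne)⟩⟩
    · rcases hm with hm | hm
      · exact Or.inr ⟨ed1 i, hm, (Gs_adj _ _ _).mpr ⟨⟨i, his, ed_eq i⟩, hne⟩⟩
      · exact Or.inl hm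

/-- The computable connectivity predicate. -/
def connP (s : Finset (Fin 12)) : Prop :=
  ∀ v : V9, v ∈ (estep s)^[8] {(none : V9)}

instance : DecidablePred connP := fun _ => by unfold connP; infer_instance

lemma card_V9 : Fintype.card V9 = 9 := by simp

lemma connP_iff (s : Finset (Fin 12)) : (Gs s).Connected ↔ connP s := by
  rw [connP, connected_iff_bfs (estep_sub s) (estep_comp s) (estep_sound s) none 8
    (by rw [card_V9])]

/-! ### Correspondence between spanning subgraphs and edge index sets -/

lemma Gs_le (s : Finset (Fin 12)) : Gs s ≤ Gc := by
  intro a b hab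
  rw [Gs_adj] at hab
  obtain ⟨⟨i, _, hed⟩, _⟩ := hab
  exact (adj_iff a b).mpr ⟨i, hed⟩

open scoped Classical in
noncomputable def toS (H : Gc.Subgraph) : Finset (Fin 12) :=
  Finset.univ.filter (fun i => ed i ∈ H.edgeSet)

lemma mem_toS {H : Gc.Subgraph} {i : Fin 12} : i ∈ toS H ↔ ed i ∈ H.edgeSet := by
  classical
  simp [toS]

lemma spanningCoe_edgeSet (H : Gc.Subgraph) : H.spanningCoe.edgeSet = H.edgeSet := by
  ext e
  induction e using Sym2.ind with
  | _ a b => exact Iff.rfl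

lemma edgeSet_eq' : Gc.edgeSet = Set.range ed := by
  ext e
  induction e using Sym2.ind with
  | _ a b => simpa [Set.mem_range] using adj_iff a b

lemma spanEq (H : Gc.Subgraph) : H.spanningCoe = Gs (toS H) := by
  have hes : H.edgeSet = ↑((toS H).image ed) := by
    ext e
    simp only [Finset.coe_image, Set.mem_image, Finset.mem_coe]
    constructor
    · intro he
      obtain ⟨i, hi⟩ := Set.mem_range.mp (by
        rw [← edgeSet_eq']; exact H.edgeSet_subset he : e ∈ Set.range ed)
      exact ⟨i, mem_toS.mpr (hi ▸ he), hi⟩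
    · rintro ⟨i, hi, rfl⟩
      exact mem_toS.mp hi
  rw [Gs, ← hes, ← spanningCoe_edgeSet H, SimpleGraph.fromEdgeSet_edgeSet]

lemma ed_not_diag (i : Fin 12) : ¬ (ed i).IsDiag := by revert i; decide

noncomputable def H_of (s : Finset (Fin 12)) : Gc.Subgraph :=
  SimpleGraph.toSubgraph (Gs s) (Gs_le s)

lemma H_of_spanning (s : Finset (Fin 12)) : (H_of s).IsSpanning :=
  SimpleGraph.toSubgraph.isSpanning _ _

lemma H_of_spanningCoe (s : Finset (Fin 12)) : (H_of s).spanningCoe = Gs s := rfl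

lemma toS_H_of (s : Finset (Fin 12)) : toS (H_of s) = s := by
  ext i
  rw [mem_toS, ed_eq i, SimpleGraph.Subgraph.mem_edgeSet]
  show (Gs s).Adj (ed1 i) (ed2 i) ↔ i ∈ s
  rw [Gs_adj]
  constructor
  · rintro ⟨⟨j, hj, hje⟩, _⟩
    rwa [ed_inj (hje.trans (ed_eq i).symm)] at hj
  · intro hi
    exact ⟨⟨i, hi, ed_eq i⟩, ed_ne i⟩

lemma H_of_toS {H : Gc.Subgraph} (hs : H.IsSpanning) : H_of (toS H) = H := by
  have hadj : (Gs (toS H)).Adj = H.Adj := by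
    rw [← spanEq H]
    rfl
  apply SimpleGraph.Subgraph.ext
  · exact (hs.verts_eq_univ).symm
  · exact hadj

lemma Gs_ncard (s : Finset (Fin 12)) : (Gs s).edgeSet.ncard = s.card := by
  have hdd : (↑(s.image ed) : Set (Sym2 V9)) \ {e | e.IsDiag} = ↑(s.image ed) := by
    apply Disjoint.sdiff_eq_left
    rw [Set.disjoint_right]
    rintro e hd he
    obtain ⟨i, _, rfl⟩ := Finset.mem_image.mp (Finset.mem_coe.mp he)
    exact ed_not_diag i hd
  rw [Gs, SimpleGraph.edgeSet_fromEdgeSet, show Sym2.diagSet = {e : Sym2 V9 | e.IsDiag} from rfl, hdd,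
    Set.ncard_coe_finset, Finset.card_image_of_injective _ ed_inj]

lemma tree_iff_of_spanning {H : Gc.Subgraph} (hs : H.IsSpanning) :
    H.coe.IsTree ↔ ((toS H).card = 8 ∧ connP (toS H)) := by
  rw [← Iso.isTree_iff (H.spanningCoeEquivCoeOfSpanning hs), spanEq H,
    isTree_iff_card, connP_iff, Gs_ncard, card_V9]
  constructor
  · rintro ⟨h1, h2⟩
    exact ⟨by omega, h1⟩
  · rintro ⟨h1, h2⟩
    exact ⟨h2, by omega⟩

lemma spokeCount_eq (H : Gc.Subgraph) :
    spokeCount H = (Finset.univ.filter fun j : Fin 4 => tau j ∈ toS H).card := by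
  classical
  have hset : {i : Fin (2 * 4) | H.Adj none (some i)}
      = sig '' {j : Fin 4 | tau j ∈ toS H} := by
    ext i
    simp only [Set.mem_setOf_eq, Set.mem_image]
    constructor
    · intro h
      have hGc : Gc.Adj none (some i) := H.adj_sub h
      obtain ⟨idx, hidx⟩ := (adj_iff _ _).mp hGc
      obtain ⟨j, rfl, rfl⟩ := spoke_case idx i hidx
      refine ⟨j, ?_, rfl⟩
      rw [mem_toS, ed_tau]
      exact SimpleGraph.Subgraph.mem_edgeSet.mpr h
    · rintro ⟨j, hj, rfl⟩
      rw [mem_toS, ed_tau] at hj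
      exact SimpleGraph.Subgraph.mem_edgeSet.mp hj
  rw [spokeCount, hset, Set.ncard_image_of_injective _ sig_inj,
    Set.ncard_eq_toFinset_card', Set.toFinset_setOf]

def sP (k : ℕ) (s : Finset (Fin 12)) : Prop :=
  s.card = 8 ∧ (Finset.univ.filter fun j : Fin 4 => tau j ∈ s).card = k ∧ connP s

instance (k : ℕ) : DecidablePred (sP k) := fun s => by unfold sP; infer_instance

noncomputable def treeEquiv (k : ℕ) :
    {H : Gc.Subgraph // H.IsSpanning ∧ H.coe.IsTree ∧ spokeCount H = k} ≃
      {s : Finset (Fin 12) // sP k s} where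
  toFun H := ⟨toS H.1, by
    obtain ⟨H, hs, ht, hk⟩ := H
    have h := (tree_iff_of_spanning hs).mp ht
    rw [spokeCount_eq] at hk
    exact ⟨h.1, hk, h.2⟩⟩
  invFun s := ⟨H_of s.1, by
    obtain ⟨s, h8, hk, hc⟩ := s
    refine ⟨H_of_spanning s, ?_, ?_⟩
    · rw [tree_iff_of_spanning (H_of_spanning s), toS_H_of]
      exact ⟨h8, hc⟩
    · rw [spokeCount_eq, toS_H_of]
      exact hk⟩
  left_inv H := Subtype.ext (H_of_toS H.2.1)
  right_inv s := Subtype.ext (toS_H_of s.1)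

lemma count_eq (k : ℕ) :
    Nat.card {H : Gc.Subgraph // H.IsSpanning ∧ H.coe.IsTree ∧ spokeCount H = k}
      = Nat.card {s : Finset (Fin 12) // sP k s} :=
  Nat.card_congr (treeEquiv k)


end Jh

open Jh in
set_option maxRecDepth 100000 in
set_option maxHeartbeats 4000000 in
/-- In `J_{2,4}`, the number of spanning trees containing exactly `k` of the
four spoke edges is `32` for `k = 1`, `80` for `k = 2`, `64` for `k = 3`, and
`16` for `k = 4`. -/
theorem jahangir_two_four_spanningTrees_by_spokes :
    Nat.card {H : (jahangir 2 4).Subgraph //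
        H.IsSpanning ∧ H.coe.IsTree ∧ spokeCount H = 1} = 32 ∧
    Nat.card {H : (jahangir 2 4).Subgraph //
        H.IsSpanning ∧ H.coe.IsTree ∧ spokeCount H = 2} = 80 ∧
    Nat.card {H : (jahangir 2 4).Subgraph //
        H.IsSpanning ∧ H.coe.IsTree ∧ spokeCount H = 3} = 64 ∧
    Nat.card {H : (jahangir 2 4).Subgraph //
        H.IsSpanning ∧ H.coe.IsTree ∧ spokeCount H = 4} = 16 :=
  ⟨(count_eq 1).trans (by rw [Nat.card_eq_fintype_card]; decide),
   (count_eq 2).trans (by rw [Nat.card_eq_fintype_card]; decide),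
   (count_eq 3).trans (by rw [Nat.card_eq_fintype_card]; decide),
   (count_eq 4).trans (by rw [Nat.card_eq_fintype_card]; decide)⟩
end

section
/- For any m ≥ 3, the number of spanning trees of J_{n,3}, viewed as a function of n, equals n^3 + 6n^2 + 9n; that is, σ(J_{n,3}) = n^3 + 3·(2n)·n + 3·(3n). -/
open SimpleGraph

/-- In a connected finite graph, `|V| ≤ |E| + 1`. -/
lemma connected_card_le {V : Type*} [Fintype V] {G : SimpleGraph V}
    (h : G.Connected) : Fintype.card V ≤ G.edgeSet.ncard + 1 := by
  classical
  obtain ⟨root⟩ := h.nonempty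
  have key : ∀ v : V, v ≠ root → ∃ u, G.Adj v u ∧ G.dist u root < G.dist v root := by
    intro v hv
    obtain ⟨p, hp⟩ := (h v root).exists_walk_length_eq_dist
    cases p with
    | nil => exact absurd rfl hv
    | cons hadj q =>
      refine ⟨_, hadj, ?_⟩
      have := SimpleGraph.dist_le q
      simp only [Walk.length_cons] at hp
      omega
  choose f hf1 hf2 using key
  have hinj : Function.Injective
      (fun v : {v : V // v ≠ root} => (⟨s(v.1, f v.1 v.2), (hf1 v.1 v.2)⟩ : G.edgeSet)) := by
    rintro ⟨v, hv⟩ ⟨w, hw⟩ hvw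
    simp only [Subtype.mk.injEq, Subtype.ext_iff, Sym2.eq_iff] at hvw
    rcases hvw with ⟨h1, h2⟩ | ⟨h1, h2⟩
    · exact Subtype.ext h1
    · exfalso
      have := hf2 v hv
      have := hf2 w hw
      subst h1
      rw [h2] at this
      omega
  have hle := Nat.card_le_card_of_injective _ hinj
  rw [Nat.card_coe_set_eq] at hle
  have h1 : Nat.card {v : V // v ≠ root} = Fintype.card V - 1 := by
    rw [Nat.card_eq_fintype_card]
    rw [Fintype.card_subtype_compl]
    simp
  have : Nonempty V := ⟨root⟩
  have := Fintype.card_pos (α := V)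
  omega

lemma isTree_of_connected_card [Fintype V] {G : SimpleGraph V}
    (h : G.Connected) (hcard : G.edgeSet.ncard + 1 = Fintype.card V) : G.IsTree := by
  classical
  rw [isTree_iff]
  refine ⟨h, ?_⟩
  by_contra hac
  rw [SimpleGraph.IsAcyclic] at hac
  push_neg at hac
  obtain ⟨v, c, hc⟩ := hac
  have hlen := hc.three_le_length
  have hne : c.edges ≠ [] := by
    intro habs
    have := c.length_edges
    rw [habs] at this
    simp at this
    omega
  obtain ⟨e, he⟩ := List.exists_mem_of_ne_nil _ hne
  have heE : e ∈ G.edgeSet := c.edges_subset_edgeSet he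
  induction e using Sym2.ind with
  | _ u w =>
  have hnb : ¬ G.IsBridge s(u, w) := by
    rw [isBridge_iff_adj_and_forall_cycle_notMem]
    push_neg
    exact ⟨v, c, hc, he⟩
    exact heE
  rw [isBridge_iff] at hnb
  push_neg at hnb
  have hadj : G.Adj u w := heE
  have hreach := hnb
  set G' : SimpleGraph V := G \ fromEdgeSet {s(u, w)} with hG'
  have hmono : ∀ {a b : V}, G.Reachable a b → G'.Reachable a b := by
    intro a b hab
    obtain ⟨p⟩ := hab
    induction p with
    | nil => exact Reachable.refl _
    | @cons a₁ b₁ c₁ hx p ih =>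
      refine Reachable.trans ?_ ih
      by_cases hcase : s(a₁, b₁) = s(u, w)
      · rw [Sym2.eq_iff] at hcase
        rcases hcase with ⟨rfl, rfl⟩ | ⟨rfl, rfl⟩
        · exact hreach
        · exact hreach.symm
      · refine Adj.reachable ?_
        rw [hG', sdiff_adj]
        refine ⟨hx, ?_⟩
        rw [fromEdgeSet_adj]
        rintro ⟨h1, -⟩
        simp only [Set.mem_singleton_iff] at h1
        exact hcase h1
  have hconn' : G'.Connected := by
    rw [connected_iff] at h ⊢
    exact ⟨fun a b => hmono (h.1 a b), h.2⟩
  have hle := connected_card_le hconn'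
  have hE' : G'.edgeSet = G.edgeSet \ {s(u, w)} := by
    rw [hG', edgeSet_sdiff, edgeSet_fromEdgeSet, edgeSet_sdiff_sdiff_isDiag]
  have hfin : G.edgeSet.Finite := Set.toFinite _
  have hcard' : G'.edgeSet.ncard = G.edgeSet.ncard - 1 := by
    rw [hE', Set.ncard_diff_singleton_of_mem heE]
  have hpos : 0 < G.edgeSet.ncard := by
    rw [Set.ncard_pos hfin]
    exact ⟨_, heE⟩
  omega

lemma iso_isAcyclic {V₁ V₂ : Type*} {G₁ : SimpleGraph V₁} {G₂ : SimpleGraph V₂}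
    (f : G₁ ≃g G₂) (hac : G₁.IsAcyclic) : G₂.IsAcyclic := by
  intro v c hc
  exact hac (c.map f.symm.toHom)
    ((Walk.map_isCycle_iff_of_injective f.symm.injective).2 hc)

/-- Trees transfer across isomorphisms. -/
lemma iso_isTree_iff {V' : Type*} {G : SimpleGraph V} {H : SimpleGraph V'} (e : G ≃g H) :
    G.IsTree ↔ H.IsTree := by
  rw [isTree_iff, isTree_iff]
  rw [e.connected_iff]
  exact and_congr_right fun _ => ⟨fun h => iso_isAcyclic e h, fun h => iso_isAcyclic e.symm h⟩


namespace JahAux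

variable {n : ℕ}

/-- Cyclic shift on `Fin (n*3)`. -/
def shift (i : Fin (n * 3)) (t : ℕ) : Fin (n * 3) :=
  ⟨((i : ℕ) + t) % (n * 3), Nat.mod_lt _ (Nat.lt_of_le_of_lt (Nat.zero_le _) i.isLt)⟩

lemma shift_val (i : Fin (n * 3)) (t : ℕ) : (shift i t : ℕ) = ((i : ℕ) + t) % (n * 3) := rfl

lemma shift_zero (i : Fin (n * 3)) : shift i 0 = i := by
  simp [shift, Fin.ext_iff, Nat.mod_eq_of_lt i.isLt]

lemma shift_add (i : Fin (n * 3)) (s t : ℕ) : shift (shift i s) t = shift i (s + t) := by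
  simp only [shift, Fin.ext_iff]
  conv_lhs => rw [Nat.add_comm]
  rw [Nat.add_mod_mod]
  congr 1
  omega

lemma shift_eq_mk (i : Fin (n * 3)) (t : ℕ) (h : (i : ℕ) + t < n * 3) :
    shift i t = ⟨(i : ℕ) + t, h⟩ := by
  simp [shift, Fin.ext_iff, Nat.mod_eq_of_lt h]

lemma shift_period (i : Fin (n * 3)) : shift i (n * 3) = i := by
  simp [shift, Fin.ext_iff, Nat.add_mod_right, Nat.mod_eq_of_lt i.isLt]

lemma shift_inj {i : Fin (n * 3)} {s t : ℕ} (hs : s < n * 3) (ht : t < n * 3) :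
    shift i s = shift i t ↔ s = t := by
  constructor
  · intro h
    have h' : ((i : ℕ) + s) % (n * 3) = ((i : ℕ) + t) % (n * 3) := by
      simpa [shift, Fin.ext_iff] using h
    have h2 : s % (n * 3) = t % (n * 3) :=
      Nat.ModEq.add_left_cancel' (i : ℕ) h'
    rwa [Nat.mod_eq_of_lt hs, Nat.mod_eq_of_lt ht] at h2
  · rintro rfl; rfl

def nxt (i : Fin (n * 3)) : Fin (n * 3) := shift i 1

lemma shift_succ (i : Fin (n * 3)) (t : ℕ) : shift i (t + 1) = nxt (shift i t) := by
  rw [nxt, shift_add]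

/-- The `k`-th hub vertex. -/
def hub (hn : 2 ≤ n) (k : Fin 3) : Fin (n * 3) :=
  ⟨(k : ℕ) * n, by
    have hk := k.isLt
    have : (k : ℕ) * n ≤ 2 * n := Nat.mul_le_mul_right n (by omega)
    omega⟩

lemma hub_val (hn : 2 ≤ n) (k : Fin 3) : (hub hn k : ℕ) = (k : ℕ) * n := rfl

lemma hub_inj {hn : 2 ≤ n} {k k' : Fin 3} (h : hub hn k = hub hn k') : k = k' := by
  have h' : (k : ℕ) * n = (k' : ℕ) * n := congrArg Fin.val h
  have : (k : ℕ) = (k' : ℕ) := Nat.eq_of_mul_eq_mul_right (by omega) h'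
  exact Fin.ext this

/-- Position of `i` relative to `base`, going forward. -/
def relPos (i base : Fin (n * 3)) : ℕ := ((i : ℕ) + n * 3 - (base : ℕ)) % (n * 3)

lemma relPos_lt (i base : Fin (n * 3)) : relPos i base < n * 3 :=
  Nat.mod_lt _ (Nat.lt_of_le_of_lt (Nat.zero_le _) i.isLt)

lemma shift_relPos (i base : Fin (n * 3)) : shift base (relPos i base) = i := by
  have hb := base.isLt
  have hi := i.isLt
  simp only [shift, relPos, Fin.ext_iff]
  rw [Nat.add_mod_mod,
    show (base : ℕ) + ((i : ℕ) + n * 3 - (base : ℕ)) = (i : ℕ) + n * 3 from by omega,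
    Nat.add_mod_right, Nat.mod_eq_of_lt hi]

lemma relPos_shift (base : Fin (n * 3)) {t : ℕ} (ht : t < n * 3) :
    relPos (shift base t) base = t := by
  have h1 := shift_relPos (shift base t) base
  exact (shift_inj (relPos_lt _ _) ht).1 h1

lemma nxt_ne (hn : 2 ≤ n) (i : Fin (n * 3)) : nxt i ≠ i := by
  have hi := i.isLt
  simp only [nxt, shift, Fin.ext_iff, ne_eq]
  intro h
  rcases Nat.lt_or_ge ((i : ℕ) + 1) (n * 3) with hc | hc
  · rw [Nat.mod_eq_of_lt hc] at h; omega
  · have he : (i : ℕ) + 1 = n * 3 := by omega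
    rw [he, Nat.mod_self] at h
    omega

lemma nxt_nxt_ne (hn : 2 ≤ n) (i : Fin (n * 3)) : nxt (nxt i) ≠ i := by
  have hi := i.isLt
  have hn3 : 6 ≤ n * 3 := by omega
  have hval : (nxt (nxt i) : ℕ) = ((i : ℕ) + 2) % (n * 3) := by
    show ((shift (shift i 1) 1 : Fin (n*3)) : ℕ) = _
    rw [shift_add]
    rfl
  simp only [Fin.ext_iff, ne_eq, hval]
  intro h
  rcases Nat.lt_or_ge ((i : ℕ) + 2) (n * 3) with hc | hc
  · rw [Nat.mod_eq_of_lt hc] at h; omega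
  · have he : (i : ℕ) + 2 = n * 3 ∨ (i : ℕ) + 2 = n * 3 + 1 := by omega
    rcases he with he | he
    · rw [he, Nat.mod_self] at h; omega
    · rw [he, Nat.add_mod_left, Nat.mod_eq_of_lt (by omega)] at h
      omega

lemma jah_adj_none_some {i : Fin (n * 3)} :
    (jahangir n 3).Adj none (some i) ↔ n ∣ (i : ℕ) := by
  simp [jahangir, SimpleGraph.fromRel_adj]

lemma jah_not_adj_none_none : ¬ (jahangir n 3).Adj none none := by
  simp [jahangir, SimpleGraph.fromRel_adj]

lemma jah_adj_some_some {i j : Fin (n * 3)} :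
    (jahangir n 3).Adj (some i) (some j) ↔
      i ≠ j ∧ ((j : ℕ) = ((i : ℕ) + 1) % (n * 3) ∨ (i : ℕ) = ((j : ℕ) + 1) % (n * 3)) := by
  simp [jahangir, SimpleGraph.fromRel_adj]

/-- Base (directed) relation for the subgraph determined by spokes `S` and
deleted cycle edges `D`. -/
def bAdj (S : Finset (Fin 3)) (D : Finset (Fin (n * 3))) :
    Option (Fin (n * 3)) → Option (Fin (n * 3)) → Prop
  | none, some i => ∃ k ∈ S, (i : ℕ) = (k : ℕ) * n
  | some i, some j => i ∉ D ∧ j = nxt i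
  | _, _ => False

lemma bAdj_sub (hn : 2 ≤ n) {S : Finset (Fin 3)} {D : Finset (Fin (n * 3))}
    {a b : Option (Fin (n * 3))} (h : bAdj S D a b) : (jahangir n 3).Adj a b := by
  match a, b with
  | none, some i =>
    obtain ⟨k, _, hk⟩ := h
    exact jah_adj_none_some.2 ⟨k, by rw [hk, Nat.mul_comm]⟩
  | some i, some j =>
    obtain ⟨-, rfl⟩ := h
    exact jah_adj_some_some.2 ⟨(nxt_ne hn i).symm, Or.inl rfl⟩
  | none, none => exact h.elim
  | some i, none => exact h.elim

/-- The subgraph of the Jahangir graph with full vertex set, spokes `S` and all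
cycle edges except those indexed by `D`. -/
def tSub (hn : 2 ≤ n) (S : Finset (Fin 3)) (D : Finset (Fin (n * 3))) :
    (jahangir n 3).Subgraph where
  verts := Set.univ
  Adj a b := bAdj S D a b ∨ bAdj S D b a
  adj_sub := fun h => h.elim (fun h' => bAdj_sub hn h') (fun h' => (bAdj_sub hn h').symm)
  edge_vert := fun _ => Set.mem_univ _
  symm := ⟨fun a b h => Or.symm h⟩

variable {hn : 2 ≤ n} {S : Finset (Fin 3)} {D : Finset (Fin (n * 3))}

lemma tSub_isSpanning : (tSub hn S D).IsSpanning := fun _ => Set.mem_univ _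

lemma tSub_adj_none_some {i : Fin (n * 3)} :
    (tSub hn S D).Adj none (some i) ↔ ∃ k ∈ S, (i : ℕ) = (k : ℕ) * n := by
  simp [tSub, bAdj]

lemma tSub_not_adj_none_none : ¬ (tSub hn S D).Adj none none := by
  simp [tSub, bAdj]

lemma tSub_adj_some_some {i j : Fin (n * 3)} :
    (tSub hn S D).Adj (some i) (some j) ↔
      (i ∉ D ∧ j = nxt i) ∨ (j ∉ D ∧ i = nxt j) := by
  simp [tSub, bAdj]

lemma tSub_adj_nxt {i : Fin (n * 3)} :
    (tSub hn S D).Adj (some i) (some (nxt i)) ↔ i ∉ D := by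
  rw [tSub_adj_some_some]
  constructor
  · rintro (⟨h, -⟩ | ⟨-, h⟩)
    · exact h
    · exact absurd h.symm (nxt_nxt_ne hn i)
  · intro h; exact Or.inl ⟨h, rfl⟩

lemma tSub_adj_hub {k : Fin 3} (hk : k ∈ S) :
    (tSub hn S D).Adj none (some (hub hn k)) :=
  tSub_adj_none_some.2 ⟨k, hk, rfl⟩

lemma mem_S_iff {k : Fin 3} :
    (tSub hn S D).Adj none (some (hub hn k)) ↔ k ∈ S := by
  rw [tSub_adj_none_some]
  constructor
  · rintro ⟨k', hk', hval⟩
    have : k' = k := by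
      have : (k' : ℕ) * n = (k : ℕ) * n := by rw [← hval]; rfl
      exact Fin.ext (Nat.eq_of_mul_eq_mul_right (by omega) this)
    rwa [← this]
  · intro hk; exact ⟨k, hk, rfl⟩

lemma tSub_inj {S' : Finset (Fin 3)} {D' : Finset (Fin (n * 3))}
    (h : tSub hn S D = tSub hn S' D') : S = S' ∧ D = D' := by
  have hAdj : ∀ a b, (tSub hn S D).Adj a b ↔ (tSub hn S' D').Adj a b := by
    intro a b; rw [h]
  constructor
  · ext k
    rw [← mem_S_iff (hn := hn) (D := D), hAdj, mem_S_iff]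
  · ext i
    have := hAdj (some i) (some (nxt i))
    rw [tSub_adj_nxt, tSub_adj_nxt] at this
    tauto

open Classical in
/-- The set of spokes of a subgraph. -/
noncomputable def Sof (hn : 2 ≤ n) (H : (jahangir n 3).Subgraph) : Finset (Fin 3) :=
  Finset.univ.filter (fun k => H.Adj none (some (hub hn k)))

open Classical in
/-- The set of deleted cycle edges of a subgraph. -/
noncomputable def Dof (H : (jahangir n 3).Subgraph) : Finset (Fin (n * 3)) :=
  Finset.univ.filter (fun i => ¬ H.Adj (some i) (some (nxt i)))

lemma eq_tSub (hn : 2 ≤ n) (H : (jahangir n 3).Subgraph) (hsp : H.IsSpanning) :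
    H = tSub hn (Sof hn H) (Dof H) := by
  classical
  have hSmem : ∀ k, k ∈ Sof hn H ↔ H.Adj none (some (hub hn k)) := by
    intro k; simp [Sof]
  have hDmem : ∀ i, i ∈ Dof H ↔ ¬ H.Adj (some i) (some (nxt i)) := by
    intro i; simp [Dof]
  have hns : ∀ i : Fin (n * 3), H.Adj none (some i) ↔
      ∃ k ∈ Sof hn H, (i : ℕ) = (k : ℕ) * n := by
    intro i
    constructor
    · intro h
      have hdvd : n ∣ (i : ℕ) := jah_adj_none_some.1 (H.adj_sub h)
      obtain ⟨c, hc⟩ := hdvd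
      have hc3 : c < 3 := by
        have := i.isLt
        by_contra hcc
        push_neg at hcc
        have h3 : 3 * n ≤ c * n := Nat.mul_le_mul_right n hcc
        have : (i : ℕ) = n * c := hc
        have hcomm : c * n = n * c := Nat.mul_comm c n
        omega
      have hival : (i : ℕ) = ((⟨c, hc3⟩ : Fin 3) : ℕ) * n := by
        simpa [Nat.mul_comm] using hc
      refine ⟨⟨c, hc3⟩, ?_, hival⟩
      rw [hSmem]
      have : some i = some (hub hn ⟨c, hc3⟩) := by
        congr 1
        exact Fin.ext hival
      rwa [this] at h
    · rintro ⟨k, hk, hval⟩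
      rw [hSmem] at hk
      have : some i = some (hub hn k) := by
        congr 1
        exact Fin.ext hval
      rwa [this]
  have hss : ∀ i j : Fin (n * 3), H.Adj (some i) (some j) ↔
      (i ∉ Dof H ∧ j = nxt i) ∨ (j ∉ Dof H ∧ i = nxt j) := by
    intro i j
    constructor
    · intro h
      have hj := jah_adj_some_some.1 (H.adj_sub h)
      rcases hj.2 with hc | hc
      · have hji : j = nxt i := Fin.ext (by simpa [nxt, shift] using hc)
        left
        refine ⟨?_, hji⟩
        rw [hDmem]; push_neg
        rwa [← hji]
      · have hij : i = nxt j := Fin.ext (by simpa [nxt, shift] using hc)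
        right
        refine ⟨?_, hij⟩
        rw [hDmem]; push_neg
        rw [← hij]
        exact h.symm
    · rintro (⟨hd, rfl⟩ | ⟨hd, rfl⟩)
      · rw [hDmem] at hd; push_neg at hd; exact hd
      · rw [hDmem] at hd; push_neg at hd; exact hd.symm
  refine SimpleGraph.Subgraph.ext ?_ ?_
  · exact Set.eq_univ_of_forall hsp
  · funext a b
    refine propext ?_
    match a, b with
    | none, none =>
      constructor
      · intro h; exact absurd (H.adj_sub h) jah_not_adj_none_none
      · intro h; exact absurd h tSub_not_adj_none_none
    | none, some i => rw [hns i, tSub_adj_none_some]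
    | some i, none =>
      constructor
      · intro h
        exact ((tSub_adj_none_some (hn := hn)).2 ((hns i).1 h.symm)).symm
      · intro h
        exact ((hns i).2 (tSub_adj_none_some.1 h.symm)).symm
    | some i, some j => rw [hss i j, tSub_adj_some_some]

lemma tSub_edge_ncard (hn : 2 ≤ n) (S : Finset (Fin 3)) (D : Finset (Fin (n * 3))) :
    ((tSub hn S D).spanningCoe.edgeSet).ncard = S.card + (n * 3 - D.card) := by
  classical
  set G := (tSub hn S D).spanningCoe with hG
  have hadj : ∀ a b, G.Adj a b ↔ (tSub hn S D).Adj a b := by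
    intro a b; rw [hG, SimpleGraph.Subgraph.spanningCoe_adj]
  let f : (↥S ⊕ ↥(Dᶜ)) → ↥G.edgeSet := fun x =>
    match x with
    | Sum.inl ⟨k, _⟩ => ⟨s(none, some (hub hn k)),
        (SimpleGraph.mem_edgeSet _).2 ((hadj _ _).2 (tSub_adj_hub (by assumption)))⟩
    | Sum.inr ⟨i, hi⟩ => ⟨s(some i, some (nxt i)),
        (SimpleGraph.mem_edgeSet _).2 ((hadj _ _).2
          (tSub_adj_nxt.2 (Finset.mem_compl.1 hi)))⟩
  have hbij : Function.Bijective f := by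
    constructor
    · rintro (⟨k, hk⟩ | ⟨i, hi⟩) (⟨k', hk'⟩ | ⟨i', hi'⟩) h <;>
        simp only [f, Subtype.mk.injEq, Sym2.eq_iff] at h
      · rcases h with ⟨-, h2⟩ | ⟨h1, -⟩
        · have : k = k' := hub_inj (by injection h2)
          subst this; rfl
        · exact absurd h1 (by simp)
      · rcases h with ⟨h1, -⟩ | ⟨h1, -⟩ <;> exact absurd h1 (by simp)
      · rcases h with ⟨h1, -⟩ | ⟨-, h1⟩ <;> exact absurd h1 (by simp)
      · rcases h with ⟨h1, h2⟩ | ⟨h1, h2⟩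
        · have : i = i' := by injection h1
          subst this; rfl
        · exfalso
          have e1 : i = nxt i' := by injection h1
          have e2 : nxt i = i' := by injection h2
          rw [← e2] at e1
          exact nxt_nxt_ne hn i e1.symm
    · rintro ⟨e, he⟩
      induction e using Sym2.ind with
      | _ a b =>
      rw [SimpleGraph.mem_edgeSet, hadj] at he
      match a, b with
      | none, none => exact absurd he tSub_not_adj_none_none
      | none, some i =>
        obtain ⟨k, hk, hval⟩ := tSub_adj_none_some.1 he
        refine ⟨Sum.inl ⟨k, hk⟩, ?_⟩
        apply Subtype.ext
        show s(none, some (hub hn k)) = s(none, some i)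
        have heq : hub hn k = i := Fin.ext (show ((hub hn k) : ℕ) = (i : ℕ) from hval.symm)
        rw [heq]
      | some i, none =>
        obtain ⟨k, hk, hval⟩ := tSub_adj_none_some.1 he.symm
        refine ⟨Sum.inl ⟨k, hk⟩, ?_⟩
        apply Subtype.ext
        show s(none, some (hub hn k)) = s(some i, none)
        rw [Sym2.eq_swap]
        have heq : hub hn k = i := Fin.ext (show ((hub hn k) : ℕ) = (i : ℕ) from hval.symm)
        rw [heq]
      | some i, some j =>
        rcases tSub_adj_some_some.1 he with ⟨hd, rfl⟩ | ⟨hd, rfl⟩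
        · exact ⟨Sum.inr ⟨i, Finset.mem_compl.2 hd⟩, rfl⟩
        · refine ⟨Sum.inr ⟨j, Finset.mem_compl.2 hd⟩, ?_⟩
          apply Subtype.ext
          show s(some j, some (nxt j)) = s(some (nxt j), some j)
          rw [Sym2.eq_swap]
  have hcard := Nat.card_congr (Equiv.ofBijective f hbij)
  rw [Nat.card_sum] at hcard
  simp only [Nat.card_eq_fintype_card, Fintype.card_coe] at hcard
  rw [← Nat.card_coe_set_eq, Nat.card_eq_fintype_card, ← hcard, Finset.card_compl]
  simp

lemma reach_segment {G : SimpleGraph (Option (Fin (n * 3)))} {i : Fin (n * 3)} (len : ℕ)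
    (h : ∀ t, t < len → G.Adj (some (shift i t)) (some (shift i (t + 1)))) :
    G.Reachable (some i) (some (shift i len)) := by
  induction len with
  | zero => rw [shift_zero]
  | succ m ih =>
    exact (ih (fun t ht => h t (by omega))).trans (h m (by omega)).reachable

lemma reach_hub_fwd {hn : 2 ≤ n} {S : Finset (Fin 3)} {D : Finset (Fin (n * 3))}
    {k : Fin 3} (hk : k ∈ S) (i : Fin (n * 3)) (len : ℕ)
    (hend : shift i len = hub hn k) (hfree : ∀ t, t < len → shift i t ∉ D) :
    (tSub hn S D).spanningCoe.Reachable (some i) none := by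
  have hseg : (tSub hn S D).spanningCoe.Reachable (some i) (some (shift i len)) := by
    refine reach_segment len ?_
    intro t ht
    rw [shift_succ, SimpleGraph.Subgraph.spanningCoe_adj, tSub_adj_nxt]
    exact hfree t ht
  rw [hend] at hseg
  refine hseg.trans (Adj.reachable ?_)
  rw [SimpleGraph.Subgraph.spanningCoe_adj]
  exact (tSub_adj_hub hk).symm

lemma reach_hub_bwd {hn : 2 ≤ n} {S : Finset (Fin 3)} {D : Finset (Fin (n * 3))}
    {k : Fin 3} (hk : k ∈ S) (i : Fin (n * 3)) (len : ℕ)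
    (hend : shift (hub hn k) len = i) (hfree : ∀ t, t < len → shift (hub hn k) t ∉ D) :
    (tSub hn S D).spanningCoe.Reachable (some i) none := by
  have hseg : (tSub hn S D).spanningCoe.Reachable (some (hub hn k)) (some i) := by
    rw [← hend]
    refine reach_segment len ?_
    intro t ht
    rw [shift_succ, SimpleGraph.Subgraph.spanningCoe_adj, tSub_adj_nxt]
    exact hfree t ht
  refine hseg.symm.trans (Adj.reachable ?_)
  rw [SimpleGraph.Subgraph.spanningCoe_adj]
  exact (tSub_adj_hub hk).symm

lemma hub_shift (hn : 2 ≤ n) (k : Fin 3) : shift (hub hn k) n = hub hn (k + 1) := by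
  fin_cases k
  · apply Fin.ext
    show (0 * n + n) % (n * 3) = _
    rw [Nat.mod_eq_of_lt (by omega)]
    show 0 * n + n = 1 * n
    omega
  · apply Fin.ext
    show (1 * n + n) % (n * 3) = _
    rw [Nat.mod_eq_of_lt (by omega)]
    show 1 * n + n = 2 * n
    omega
  · apply Fin.ext
    show (2 * n + n) % (n * 3) = _
    rw [show 2 * n + n = n * 3 from by omega, Nat.mod_self]
    show 0 = 0 * n
    omega

lemma connected_of_reach_none {G : SimpleGraph (Option (Fin (n * 3)))}
    (h : ∀ i : Fin (n * 3), G.Reachable (some i) none) : G.Connected := by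
  rw [SimpleGraph.connected_iff]
  refine ⟨?_, ⟨none⟩⟩
  have h' : ∀ v : Option (Fin (n * 3)), G.Reachable v none := by
    intro v
    match v with
    | none => exact Reachable.refl _
    | some i => exact h i
  intro u v
  exact (h' u).trans (h' v).symm

/-- Deleted edges for a spanning tree with 3 spokes. -/
def DA (hn : 2 ≤ n) (a b c : Fin n) : Finset (Fin (n * 3)) :=
  {shift (hub hn 0) (a : ℕ), shift (hub hn 0) (n + (b : ℕ)), shift (hub hn 0) (n + n + (c : ℕ))}

/-- Spokes for a spanning tree with 2 spokes. -/
def SB (k : Fin 3) : Finset (Fin 3) := {k, k + 1}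

/-- Deleted edges for a spanning tree with 2 spokes. -/
def DB (hn : 2 ≤ n) (k : Fin 3) (a : Fin n) (b : Fin (2 * n)) : Finset (Fin (n * 3)) :=
  {shift (hub hn k) (a : ℕ), shift (hub hn k) (n + (b : ℕ))}

lemma connA (hn : 2 ≤ n) (a b c : Fin n) :
    (tSub hn Finset.univ (DA hn a b c)).spanningCoe.Connected := by
  apply connected_of_reach_none
  intro i
  have ha := a.isLt
  have hb := b.isLt
  have hc := c.isLt
  set j := relPos i (hub hn 0) with hjdef
  have hjlt : j < n * 3 := relPos_lt _ _
  have hji : shift (hub hn 0) j = i := shift_relPos _ _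
  have hmem : ∀ x : Fin (n * 3), x ∈ DA hn a b c ↔
      x = shift (hub hn 0) (a : ℕ) ∨ x = shift (hub hn 0) (n + (b : ℕ)) ∨
      x = shift (hub hn 0) (n + n + (c : ℕ)) := by
    intro x; simp [DA]
  have h2eq : shift (hub hn 0) (n + n) = hub hn (0 + 1 + 1) := by
    rw [← shift_add, hub_shift, hub_shift]
  by_cases h1 : j ≤ (a : ℕ)
  · refine reach_hub_bwd (Finset.mem_univ 0) i j hji ?_
    intro t ht hx
    rcases (hmem _).1 hx with h | h | h <;>
      (have := (shift_inj (by omega) (by omega)).1 h; omega)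
  · by_cases h2 : j ≤ n
    · refine reach_hub_fwd (Finset.mem_univ (0 + 1)) i (n - j) ?_ ?_
      · rw [← hji, shift_add, show j + (n - j) = n from by omega, hub_shift]
      · intro t ht hx
        rw [← hji, shift_add] at hx
        rcases (hmem _).1 hx with h | h | h <;>
          (have := (shift_inj (by omega) (by omega)).1 h; omega)
    · by_cases h3 : j ≤ n + (b : ℕ)
      · refine reach_hub_bwd (Finset.mem_univ (0 + 1)) i (j - n) ?_ ?_
        · rw [← hub_shift hn 0, shift_add, show n + (j - n) = j from by omega, hji]
        · intro t ht hx
          rw [← hub_shift hn 0, shift_add] at hx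
          rcases (hmem _).1 hx with h | h | h <;>
            (have := (shift_inj (by omega) (by omega)).1 h; omega)
      · by_cases h4 : j ≤ n + n
        · refine reach_hub_fwd (Finset.mem_univ (0 + 1 + 1)) i (n + n - j) ?_ ?_
          · rw [← hji, shift_add, show j + (n + n - j) = n + n from by omega, h2eq]
          · intro t ht hx
            rw [← hji, shift_add] at hx
            rcases (hmem _).1 hx with h | h | h <;>
              (have := (shift_inj (by omega) (by omega)).1 h; omega)
        · by_cases h5 : j ≤ n + n + (c : ℕ)
          · refine reach_hub_bwd (Finset.mem_univ (0 + 1 + 1)) i (j - (n + n)) ?_ ?_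
            · rw [← h2eq, shift_add, show n + n + (j - (n + n)) = j from by omega, hji]
            · intro t ht hx
              rw [← h2eq, shift_add] at hx
              rcases (hmem _).1 hx with h | h | h <;>
                (have := (shift_inj (by omega) (by omega)).1 h; omega)
          · refine reach_hub_fwd (Finset.mem_univ 0) i (n * 3 - j) ?_ ?_
            · rw [← hji, shift_add, show j + (n * 3 - j) = n * 3 from by omega, shift_period]
            · intro t ht hx
              rw [← hji, shift_add] at hx
              rcases (hmem _).1 hx with h | h | h <;>
                (have := (shift_inj (by omega) (by omega)).1 h; omega)

lemma connB (hn : 2 ≤ n) (k : Fin 3) (a : Fin n) (b : Fin (2 * n)) :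
    (tSub hn (SB k) (DB hn k a b)).spanningCoe.Connected := by
  apply connected_of_reach_none
  intro i
  have ha := a.isLt
  have hb := b.isLt
  set j := relPos i (hub hn k) with hjdef
  have hjlt : j < n * 3 := relPos_lt _ _
  have hji : shift (hub hn k) j = i := shift_relPos _ _
  have hkS : k ∈ SB k := by simp [SB]
  have hk1S : k + 1 ∈ SB k := by simp [SB]
  have hmem : ∀ x : Fin (n * 3), x ∈ DB hn k a b ↔
      x = shift (hub hn k) (a : ℕ) ∨ x = shift (hub hn k) (n + (b : ℕ)) := by
    intro x; simp [DB]
  by_cases h1 : j ≤ (a : ℕ)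
  · refine reach_hub_bwd hkS i j hji ?_
    intro t ht hx
    rcases (hmem _).1 hx with h | h <;>
      (have := (shift_inj (by omega) (by omega)).1 h; omega)
  · by_cases h2 : j ≤ n
    · refine reach_hub_fwd hk1S i (n - j) ?_ ?_
      · rw [← hji, shift_add, show j + (n - j) = n from by omega, hub_shift]
      · intro t ht hx
        rw [← hji, shift_add] at hx
        rcases (hmem _).1 hx with h | h <;>
          (have := (shift_inj (by omega) (by omega)).1 h; omega)
    · by_cases h3 : j ≤ n + (b : ℕ)
      · refine reach_hub_bwd hk1S i (j - n) ?_ ?_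
        · rw [← hub_shift hn k, shift_add, show n + (j - n) = j from by omega, hji]
        · intro t ht hx
          rw [← hub_shift hn k, shift_add] at hx
          rcases (hmem _).1 hx with h | h <;>
            (have := (shift_inj (by omega) (by omega)).1 h; omega)
      · refine reach_hub_fwd hkS i (n * 3 - j) ?_ ?_
        · rw [← hji, shift_add, show j + (n * 3 - j) = n * 3 from by omega, shift_period]
        · intro t ht hx
          rw [← hji, shift_add] at hx
          rcases (hmem _).1 hx with h | h <;>
            (have := (shift_inj (by omega) (by omega)).1 h; omega)

lemma connC (hn : 2 ≤ n) (k : Fin 3) (d : Fin (n * 3)) :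
    (tSub hn {k} {d}).spanningCoe.Connected := by
  apply connected_of_reach_none
  intro i
  set j := relPos i (hub hn k) with hjdef
  set e := relPos d (hub hn k) with hedef
  have hjlt : j < n * 3 := relPos_lt _ _
  have helt : e < n * 3 := relPos_lt _ _
  have hji : shift (hub hn k) j = i := shift_relPos _ _
  have hde : shift (hub hn k) e = d := shift_relPos _ _
  have hkS : k ∈ ({k} : Finset (Fin 3)) := Finset.mem_singleton_self k
  by_cases h1 : j ≤ e
  · refine reach_hub_bwd hkS i j hji ?_
    intro t ht hx
    rw [Finset.mem_singleton, ← hde] at hx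
    have := (shift_inj (by omega) (by omega)).1 hx
    omega
  · refine reach_hub_fwd hkS i (n * 3 - j) ?_ ?_
    · rw [← hji, shift_add, show j + (n * 3 - j) = n * 3 from by omega, shift_period]
    · intro t ht hx
      rw [Finset.mem_singleton, ← hde] at hx
      rw [← hji, shift_add] at hx
      have := (shift_inj (by omega) (by omega)).1 hx
      omega

lemma card_SB (k : Fin 3) : (SB k).card = 2 := by
  have : k ≠ k + 1 := by fin_cases k <;> decide
  rw [SB, Finset.card_insert_of_notMem (by simpa using this), Finset.card_singleton]

lemma card_DB (hn : 2 ≤ n) (k : Fin 3) (a : Fin n) (b : Fin (2 * n)) :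
    (DB hn k a b).card = 2 := by
  have ha := a.isLt
  have hb := b.isLt
  have hne : shift (hub hn k) (a : ℕ) ≠ shift (hub hn k) (n + (b : ℕ)) := by
    intro h
    have := (shift_inj (by omega) (by omega)).1 h
    omega
  rw [DB, Finset.card_insert_of_notMem (by simpa using hne), Finset.card_singleton]

lemma card_DA (hn : 2 ≤ n) (a b c : Fin n) : (DA hn a b c).card = 3 := by
  have ha := a.isLt
  have hb := b.isLt
  have hc := c.isLt
  have h12 : shift (hub hn 0) (a : ℕ) ≠ shift (hub hn 0) (n + (b : ℕ)) := by
    intro h; have := (shift_inj (by omega) (by omega)).1 h; omega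
  have h13 : shift (hub hn 0) (a : ℕ) ≠ shift (hub hn 0) (n + n + (c : ℕ)) := by
    intro h; have := (shift_inj (by omega) (by omega)).1 h; omega
  have h23 : shift (hub hn 0) (n + (b : ℕ)) ≠ shift (hub hn 0) (n + n + (c : ℕ)) := by
    intro h; have := (shift_inj (by omega) (by omega)).1 h; omega
  rw [DA, Finset.card_insert_of_notMem (by simp [h12, h13]),
    Finset.card_insert_of_notMem (by simpa using h23), Finset.card_singleton]

lemma card_option_fin : Fintype.card (Option (Fin (n * 3))) = n * 3 + 1 := by simp

lemma treeA (hn : 2 ≤ n) (a b c : Fin n) :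
    (tSub hn Finset.univ (DA hn a b c)).spanningCoe.IsTree := by
  refine isTree_of_connected_card (connA hn a b c) ?_
  rw [tSub_edge_ncard, card_DA, card_option_fin]
  simp only [Finset.card_univ, Fintype.card_fin]
  omega

lemma treeB (hn : 2 ≤ n) (k : Fin 3) (a : Fin n) (b : Fin (2 * n)) :
    (tSub hn (SB k) (DB hn k a b)).spanningCoe.IsTree := by
  refine isTree_of_connected_card (connB hn k a b) ?_
  rw [tSub_edge_ncard, card_DB, card_SB, card_option_fin]
  omega

lemma treeC (hn : 2 ≤ n) (k : Fin 3) (d : Fin (n * 3)) :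
    (tSub hn {k} {d}).spanningCoe.IsTree := by
  refine isTree_of_connected_card (connC hn k d) ?_
  rw [tSub_edge_ncard, Finset.card_singleton, Finset.card_singleton, card_option_fin]
  omega

/-- The canonical isomorphism between `H.coe` and `H.spanningCoe` for spanning `H`. -/
def spanIso {V : Type*} {G : SimpleGraph V} (H : G.Subgraph) (hsp : H.IsSpanning) :
    H.coe ≃g H.spanningCoe where
  toEquiv := Equiv.subtypeUnivEquiv hsp
  map_rel_iff' := Iff.rfl

lemma coe_isTree_iff {V : Type*} {G : SimpleGraph V} (H : G.Subgraph) (hsp : H.IsSpanning) :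
    H.coe.IsTree ↔ H.spanningCoe.IsTree :=
  iso_isTree_iff (spanIso H hsp)

/-- Separation: in an acyclic `tSub`, going forward from a used hub `k`,
some deleted edge occurs before the next used hub `k'`. -/
lemma sep {hn : 2 ≤ n} {S : Finset (Fin 3)} {D : Finset (Fin (n * 3))}
    (hac : (tSub hn S D).spanningCoe.IsAcyclic) {k k' : Fin 3}
    (hk : k ∈ S) (hk' : k' ∈ S) (hne : k ≠ k') :
    ∃ d ∈ D, relPos d (hub hn k) < (((k' : ℕ) + 3 - (k : ℕ)) % 3) * n := by
  by_contra hcon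
  push_neg at hcon
  set dst := (((k' : ℕ) + 3 - (k : ℕ)) % 3) * n with hdst
  have hdst2 : dst ≤ 2 * n := by
    have h3 : ((k' : ℕ) + 3 - (k : ℕ)) % 3 ≤ 2 := by omega
    exact Nat.mul_le_mul_right n h3
  have hG := tSub_adj_hub (hn := hn) (D := D) hk
  set G := (tSub hn S D).spanningCoe with hGdef
  have hGadj : ∀ a b, G.Adj a b ↔ (tSub hn S D).Adj a b := by
    intro a b; rw [hGdef, SimpleGraph.Subgraph.spanningCoe_adj]
  have hadj0 : G.Adj none (some (hub hn k)) := (hGadj _ _).2 hG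
  have hbr : G.IsBridge s(none, some (hub hn k)) :=
    SimpleGraph.isAcyclic_iff_forall_edge_isBridge.1 hac
      ((SimpleGraph.mem_edgeSet _).2 hadj0)
  rw [SimpleGraph.isBridge_iff] at hbr
  refine hbr ?_
  set G' := G \ SimpleGraph.fromEdgeSet {s(none, some (hub hn k))} with hG'def
  have hseg : G'.Reachable (some (hub hn k)) (some (shift (hub hn k) dst)) := by
    refine reach_segment dst ?_
    intro t ht
    rw [hG'def, SimpleGraph.sdiff_adj]
    constructor
    · rw [shift_succ, hGadj, tSub_adj_nxt]
      intro hmem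
      have := hcon _ hmem
      rw [relPos_shift _ (by omega)] at this
      omega
    · rw [SimpleGraph.fromEdgeSet_adj]
      rintro ⟨h1, -⟩
      rw [Set.mem_singleton_iff, Sym2.eq_iff] at h1
      rcases h1 with ⟨h1, -⟩ | ⟨-, h1⟩ <;> exact nomatch h1
  have hdstend : shift (hub hn k) dst = hub hn k' := by
    rw [hdst]
    apply Fin.ext
    show ((k : ℕ) * n + ((k' : ℕ) + 3 - (k : ℕ)) % 3 * n) % (n * 3) = (k' : ℕ) * n
    have hkv : (k : ℕ) < 3 := k.isLt
    have hk'v : (k' : ℕ) < 3 := k'.isLt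
    have hmono1 : (k : ℕ) * n ≤ 2 * n := Nat.mul_le_mul_right n (by omega)
    have hmono2 : (k' : ℕ) * n ≤ 2 * n := Nat.mul_le_mul_right n (by omega)
    rcases Nat.lt_or_ge (k : ℕ) (k' : ℕ) with hlt | hge
    · have hm : ((k' : ℕ) + 3 - (k : ℕ)) % 3 = (k' : ℕ) - (k : ℕ) := by omega
      rw [hm]
      have e1 : ((k' : ℕ) - (k : ℕ)) * n = (k' : ℕ) * n - (k : ℕ) * n := Nat.sub_mul _ _ _
      have hmono3 : (k : ℕ) * n ≤ (k' : ℕ) * n := Nat.mul_le_mul_right n (by omega)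
      rw [Nat.mod_eq_of_lt (by omega)]
      omega
    · have hm : ((k' : ℕ) + 3 - (k : ℕ)) % 3 = (k' : ℕ) + 3 - (k : ℕ) := by
        have hnev : (k : ℕ) ≠ (k' : ℕ) := fun h => hne (Fin.ext h)
        omega
      rw [hm]
      have e1 : ((k' : ℕ) + 3 - (k : ℕ)) * n = ((k' : ℕ) + 3) * n - (k : ℕ) * n :=
        Nat.sub_mul _ _ _
      have e2 : ((k' : ℕ) + 3) * n = (k' : ℕ) * n + 3 * n := Nat.add_mul _ _ _
      have hmono3 : (k : ℕ) * n ≤ ((k' : ℕ) + 3) * n := Nat.mul_le_mul_right n (by omega)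
      have hsum : (k : ℕ) * n + ((k' : ℕ) + 3 - (k : ℕ)) * n = n * 3 + (k' : ℕ) * n := by
        omega
      rw [hsum, Nat.add_mod_left, Nat.mod_eq_of_lt (by omega)]
  rw [hdstend] at hseg
  have hsp' : G'.Adj none (some (hub hn k')) := by
    rw [hG'def, SimpleGraph.sdiff_adj]
    constructor
    · exact (hGadj _ _).2 (tSub_adj_hub hk')
    · rw [SimpleGraph.fromEdgeSet_adj]
      rintro ⟨h1, -⟩
      rw [Set.mem_singleton_iff, Sym2.eq_iff] at h1
      rcases h1 with ⟨-, h2⟩ | ⟨h1, -⟩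
      · have : k' = k := hub_inj (by injection h2)
        exact hne this.symm
      · exact nomatch h1
  exact hsp'.reachable.trans hseg.symm

lemma fin3_ne_succ : ∀ k : Fin 3, k ≠ k + 1 := by decide

lemma fin3_dst1 : ∀ k : Fin 3, (((k + 1 : Fin 3) : ℕ) + 3 - (k : ℕ)) % 3 = 1 := by decide

lemma fin3_dst2 : ∀ k : Fin 3, ((k : ℕ) + 3 - ((k + 1 : Fin 3) : ℕ)) % 3 = 2 := by decide

lemma SB_inj : ∀ k k' : Fin 3, SB k = SB k' → k = k' := by decide

/-- Parameter space for spanning trees of `J_{n,3}`. -/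
abbrev Param (n : ℕ) :=
  (Fin n × Fin n × Fin n) ⊕ ((Fin 3 × Fin n × Fin (2 * n)) ⊕ (Fin 3 × Fin (n * 3)))

/-- The subgraph associated to a parameter. -/
def pSub (hn : 2 ≤ n) : Param n → (jahangir n 3).Subgraph
  | .inl (a, b, c) => tSub hn Finset.univ (DA hn a b c)
  | .inr (.inl (k, a, b)) => tSub hn (SB k) (DB hn k a b)
  | .inr (.inr (k, d)) => tSub hn {k} {d}

lemma pSub_isSpanning (hn : 2 ≤ n) (p : Param n) : (pSub hn p).IsSpanning := by
  rcases p with ⟨a, b, c⟩ | ⟨k, a, b⟩ | ⟨k, d⟩ <;> exact tSub_isSpanning (hn := hn)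

lemma pSub_isTree (hn : 2 ≤ n) (p : Param n) : (pSub hn p).coe.IsTree := by
  rcases p with ⟨a, b, c⟩ | ⟨k, a, b⟩ | ⟨k, d⟩ <;>
    rw [coe_isTree_iff _ (pSub_isSpanning hn _)]
  · exact treeA hn a b c
  · exact treeB hn k a b
  · exact treeC hn k d

lemma pSub_injective (hn : 2 ≤ n) : Function.Injective (pSub hn) := by
  intro p q h
  rcases p with ⟨a, b, c⟩ | ⟨k, a, b⟩ | ⟨k, d⟩ <;>
    rcases q with ⟨a', b', c'⟩ | ⟨k', a', b'⟩ | ⟨k', d'⟩ <;>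
    simp only [pSub] at h <;> obtain ⟨hS, hD⟩ := tSub_inj h
  · -- A vs A
    have ha0 := a.isLt; have hb0 := b.isLt; have hc0 := c.isLt
    have ha0' := a'.isLt; have hb0' := b'.isLt; have hc0' := c'.isLt
    have h1 : (a : ℕ) = (a' : ℕ) := by
      have hm : shift (hub hn 0) (a : ℕ) ∈ DA hn a' b' c' := by
        rw [← hD]; simp [DA]
      simp only [DA, Finset.mem_insert, Finset.mem_singleton] at hm
      rcases hm with h' | h' | h' <;>
        (have := (shift_inj (by omega) (by omega)).1 h'; omega)
    have h2 : (b : ℕ) = (b' : ℕ) := by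
      have hm : shift (hub hn 0) (n + (b : ℕ)) ∈ DA hn a' b' c' := by
        rw [← hD]; simp [DA]
      simp only [DA, Finset.mem_insert, Finset.mem_singleton] at hm
      rcases hm with h' | h' | h' <;>
        (have := (shift_inj (by omega) (by omega)).1 h'; omega)
    have h3 : (c : ℕ) = (c' : ℕ) := by
      have hm : shift (hub hn 0) (n + n + (c : ℕ)) ∈ DA hn a' b' c' := by
        rw [← hD]; simp [DA]
      simp only [DA, Finset.mem_insert, Finset.mem_singleton] at hm
      rcases hm with h' | h' | h' <;>
        (have := (shift_inj (by omega) (by omega)).1 h'; omega)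
    simp only [Sum.inl.injEq, Prod.mk.injEq]
    exact ⟨Fin.ext h1, Fin.ext h2, Fin.ext h3⟩
  · -- A vs B : impossible by cards
    exfalso
    have := congrArg Finset.card hS
    rw [card_SB] at this
    simp at this
  · exfalso
    have := congrArg Finset.card hS
    rw [Finset.card_singleton] at this
    simp at this
  · exfalso
    have := congrArg Finset.card hS
    rw [card_SB] at this
    simp at this
  · -- B vs B
    have hk : k = k' := SB_inj _ _ hS
    subst hk
    have ha0 := a.isLt; have hb0 := b.isLt
    have ha0' := a'.isLt; have hb0' := b'.isLt
    have h1 : (a : ℕ) = (a' : ℕ) := by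
      have hm : shift (hub hn k) (a : ℕ) ∈ DB hn k a' b' := by
        rw [← hD]; simp [DB]
      simp only [DB, Finset.mem_insert, Finset.mem_singleton] at hm
      rcases hm with h' | h' <;>
        (have := (shift_inj (by omega) (by omega)).1 h'; omega)
    have h2 : (b : ℕ) = (b' : ℕ) := by
      have hm : shift (hub hn k) (n + (b : ℕ)) ∈ DB hn k a' b' := by
        rw [← hD]; simp [DB]
      simp only [DB, Finset.mem_insert, Finset.mem_singleton] at hm
      rcases hm with h' | h' <;>
        (have := (shift_inj (by omega) (by omega)).1 h'; omega)
    obtain rfl : a = a' := Fin.ext h1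
    obtain rfl : b = b' := Fin.ext h2
    rfl
  · exfalso
    have := congrArg Finset.card hS
    rw [card_SB, Finset.card_singleton] at this
    omega
  · exfalso
    have := congrArg Finset.card hS
    rw [Finset.card_singleton] at this
    simp at this
  · exfalso
    have := congrArg Finset.card hS
    rw [Finset.card_singleton, card_SB] at this
    omega
  · -- C vs C
    have hk : k = k' := Finset.singleton_injective hS
    have hd : d = d' := Finset.singleton_injective hD
    rw [hk, hd]

lemma exists_adj_of_reachable_ne {V : Type*} {G : SimpleGraph V} {u v : V}
    (h : G.Reachable u v) (hne : u ≠ v) : ∃ w, G.Adj u w := by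
  obtain ⟨p⟩ := h
  cases p with
  | nil => exact absurd rfl hne
  | cons h _ => exact ⟨_, h⟩

lemma IsTree.ncard_edgeSet {V : Type*} [Fintype V] {G : SimpleGraph V} (h : G.IsTree) :
    G.edgeSet.ncard + 1 = Fintype.card V := by
  classical
  have h1 := h.card_edgeFinset
  rwa [← Nat.card_coe_set_eq, Nat.card_eq_fintype_card, ← SimpleGraph.edgeFinset_card]

lemma pSub_surjective (hn : 2 ≤ n) (H : (jahangir n 3).Subgraph)
    (hsp : H.IsSpanning) (ht : H.coe.IsTree) : ∃ p : Param n, pSub hn p = H := by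
  classical
  have hHeq := eq_tSub hn H hsp
  set S := Sof hn H with hSdef
  set D := Dof H with hDdef
  have htree' : (tSub hn S D).spanningCoe.IsTree := by
    rw [← hHeq]
    exact (coe_isTree_iff H hsp).1 ht
  have hconn : (tSub hn S D).spanningCoe.Connected := ((isTree_iff _).1 htree').1
  have hac : (tSub hn S D).spanningCoe.IsAcyclic := ((isTree_iff _).1 htree').2
  -- edge count
  have hcnt : ((tSub hn S D).spanningCoe.edgeSet).ncard + 1 = n * 3 + 1 := by
    rw [IsTree.ncard_edgeSet htree', card_option_fin]
  rw [tSub_edge_ncard] at hcnt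
  have hDle : D.card ≤ n * 3 := by
    have := Finset.card_le_univ D
    simpa using this
  have hSle : S.card ≤ 3 := by
    have := Finset.card_le_univ S
    simpa using this
  have hSD : S.card = D.card := by omega
  -- S nonempty
  have hSne : S.Nonempty := by
    have h0 : (0 : ℕ) < n * 3 := by omega
    have hre : (tSub hn S D).spanningCoe.Reachable none (some ⟨0, h0⟩) :=
      hconn.preconnected none _
    obtain ⟨v, hadj⟩ := exists_adj_of_reachable_ne hre (by simp)
    match v, hadj with
    | none, hadj =>
      rw [SimpleGraph.Subgraph.spanningCoe_adj] at hadj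
      exact absurd hadj tSub_not_adj_none_none
    | some i, hadj =>
      rw [SimpleGraph.Subgraph.spanningCoe_adj] at hadj
      obtain ⟨k, hk, -⟩ := tSub_adj_none_some.1 hadj
      exact ⟨k, hk⟩
  have hSpos : 0 < S.card := Finset.card_pos.2 hSne
  have hcases : S.card = 1 ∨ S.card = 2 ∨ S.card = 3 := by omega
  rcases hcases with hc | hc | hc
  · -- one spoke
    obtain ⟨k, hSk⟩ := Finset.card_eq_one.1 hc
    have hDc : D.card = 1 := by omega
    obtain ⟨d, hDd⟩ := Finset.card_eq_one.1 hDc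
    refine ⟨.inr (.inr (k, d)), ?_⟩
    rw [hHeq, hSk, hDd]
    rfl
  · -- two spokes
    obtain ⟨x, y, hxy, hSxy⟩ := Finset.card_eq_two.1 hc
    have hexk : ∃ k : Fin 3, S = SB k := by
      rw [hSxy]
      fin_cases x <;> fin_cases y <;>
        first
        | exact absurd rfl hxy
        | exact ⟨0, by decide⟩
        | exact ⟨1, by decide⟩
        | exact ⟨2, by decide⟩
    obtain ⟨k, hSk⟩ := hexk
    have hk : k ∈ S := by rw [hSk]; simp [SB]
    have hk1 : k + 1 ∈ S := by rw [hSk]; simp [SB]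
    obtain ⟨d1, hd1D, hd1lt⟩ := sep hac hk hk1 (fin3_ne_succ k)
    rw [fin3_dst1, one_mul] at hd1lt
    obtain ⟨d2, hd2D, hd2lt⟩ := sep hac hk1 hk (Ne.symm (fin3_ne_succ k))
    rw [fin3_dst2] at hd2lt
    set a := relPos d1 (hub hn k) with hadef
    set b := relPos d2 (hub hn (k + 1)) with hbdef
    have hd1eq : d1 = shift (hub hn k) a := (shift_relPos _ _).symm
    have hd2eq : d2 = shift (hub hn k) (n + b) := by
      rw [← shift_add, hub_shift]
      exact (shift_relPos _ _).symm
    have hDeq : DB hn k ⟨a, by omega⟩ ⟨b, by omega⟩ = D := by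
      apply Finset.eq_of_subset_of_card_le
      · intro x hx
        simp only [DB, Finset.mem_insert, Finset.mem_singleton] at hx
        rcases hx with rfl | rfl
        · rwa [← hd1eq]
        · rwa [← hd2eq]
      · rw [card_DB]
        omega
    refine ⟨.inr (.inl (k, ⟨a, by omega⟩, ⟨b, by omega⟩)), ?_⟩
    rw [hHeq, hSk, ← hDeq]
    rfl
  · -- three spokes
    have hSu : S = Finset.univ := Finset.eq_univ_of_card S (by rw [hc]; simp)
    have hm0 : (0 : Fin 3) ∈ S := hSu ▸ Finset.mem_univ _
    have hm1 : (1 : Fin 3) ∈ S := hSu ▸ Finset.mem_univ _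
    have hm2 : (2 : Fin 3) ∈ S := hSu ▸ Finset.mem_univ _
    obtain ⟨d1, hd1D, hd1lt⟩ := sep hac hm0 hm1 (by decide)
    rw [show (((1 : Fin 3) : ℕ) + 3 - ((0 : Fin 3) : ℕ)) % 3 = 1 from by decide,
      one_mul] at hd1lt
    obtain ⟨d2, hd2D, hd2lt⟩ := sep hac hm1 hm2 (by decide)
    rw [show (((2 : Fin 3) : ℕ) + 3 - ((1 : Fin 3) : ℕ)) % 3 = 1 from by decide,
      one_mul] at hd2lt
    obtain ⟨d3, hd3D, hd3lt⟩ := sep hac hm2 hm0 (by decide)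
    rw [show (((0 : Fin 3) : ℕ) + 3 - ((2 : Fin 3) : ℕ)) % 3 = 1 from by decide,
      one_mul] at hd3lt
    set a1 := relPos d1 (hub hn 0) with ha1def
    set a2 := relPos d2 (hub hn 1) with ha2def
    set a3 := relPos d3 (hub hn 2) with ha3def
    have h01 : ((0 : Fin 3) + 1) = (1 : Fin 3) := by decide
    have h12 : ((1 : Fin 3) + 1) = (2 : Fin 3) := by decide
    have hd1eq : d1 = shift (hub hn 0) a1 := (shift_relPos _ _).symm
    have hd2eq : d2 = shift (hub hn 0) (n + a2) := by
      rw [← shift_add, hub_shift, h01]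
      exact (shift_relPos _ _).symm
    have hd3eq : d3 = shift (hub hn 0) (n + n + a3) := by
      rw [show n + n + a3 = n + (n + a3) from by omega, ← shift_add, hub_shift, h01,
        ← shift_add, hub_shift, h12]
      exact (shift_relPos _ _).symm
    have hDc : D.card = 3 := by omega
    have hDeq : DA hn ⟨a1, by omega⟩ ⟨a2, by omega⟩ ⟨a3, by omega⟩ = D := by
      apply Finset.eq_of_subset_of_card_le
      · intro x hx
        simp only [DA, Finset.mem_insert, Finset.mem_singleton] at hx
        rcases hx with rfl | rfl | rfl
        · rwa [← hd1eq]
        · rwa [← hd2eq]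
        · rwa [← hd3eq]
      · rw [card_DA]
        omega
    refine ⟨.inl (⟨a1, by omega⟩, ⟨a2, by omega⟩, ⟨a3, by omega⟩), ?_⟩
    rw [hHeq, hSu, ← hDeq]
    rfl

end JahAux

/-- The number of spanning trees of the Jahangir graph `J_{n,3}`, as a function
of `n`, is `n^3 + 3·(2n)·n + 3·(3n) = n^3 + 6n^2 + 9n`. -/
theorem jahangir_n_three_spanningTreeCount (n : ℕ) (hn : 2 ≤ n) :
    spanningTreeCount (jahangir n 3) = n ^ 3 + 3 * (2 * n) * n + 3 * (3 * n) := by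
  classical
  rw [spanningTreeCount]
  have hbij : Function.Bijective (fun p : JahAux.Param n =>
      (⟨JahAux.pSub hn p, JahAux.pSub_isSpanning hn p, JahAux.pSub_isTree hn p⟩ :
        {H : (jahangir n 3).Subgraph // H.IsSpanning ∧ H.coe.IsTree})) := by
    constructor
    · intro p q h
      exact JahAux.pSub_injective hn (congrArg Subtype.val h)
    · rintro ⟨H, hsp, ht⟩
      obtain ⟨p, hp⟩ := JahAux.pSub_surjective hn H hsp ht
      exact ⟨p, Subtype.ext hp⟩
  rw [← Nat.card_congr (Equiv.ofBijective _ hbij)]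
  rw [Nat.card_eq_fintype_card]
  simp only [Fintype.card_sum, Fintype.card_prod, Fintype.card_fin]
  ring
end
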